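/- arXiv:1210.4965 — 4 statements merged into one kernel-verified Lean document; each statement's English description precedes it below -/
import Mathlib

section
/- Let ξ be a primitive cube root of unity and let R = Z_3[ξ] be the ring of integers of Q_3(ξ), with uniformizer π = ξ − 1. Then the kernel of the reduction map GL_m(R) → GL_m(R/π²R) is torsion-free. -/
set_option maxHeartbeats 1000000
set_option synthInstance.maxHeartbeats 400000

instance : Fact (Nat.Prime 3) := ⟨by norm_num⟩

/-- Mathlib's former `Monoid.IsTorsionFree` (removed since), with its old meaning. -/
def Monoid.IsTorsionFree (G : Type*) [Monoid G] : Prop :=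
  ∀ g : G, g ≠ 1 → ¬IsOfFinOrder g

/-- `R = ℤ₃[ξ]`, the valuation ring of `ℚ₃(ξ)` for `ξ` a primitive cube root of unity,
realised as `ℤ₃[X]/(X² + X + 1)`. -/
abbrev Rxi : Type := AdjoinRoot (Polynomial.X ^ 2 + Polynomial.X + 1 : Polynomial ℤ_[3])

/-- `ξ`, a primitive cube root of unity. -/
noncomputable def xi : Rxi := AdjoinRoot.root _

/-- The uniformiser `π = ξ - 1` of `ℤ₃[ξ]`. -/
noncomputable def piu : Rxi := xi - 1

open Polynomial in
lemma monic_f : (Polynomial.X ^ 2 + Polynomial.X + 1 : Polynomial ℤ_[3]).Monic := by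
  rw [add_assoc]
  apply Polynomial.monic_X_pow_add
  have h1 : (Polynomial.X + 1 : Polynomial ℤ_[3]).degree ≤ 1 := by
    simpa using Polynomial.degree_X_add_C (1 : ℤ_[3]) |>.le
  exact lt_of_le_of_lt h1 (by norm_num)

lemma xi_eq : xi ^ 2 + xi + 1 = 0 := by
  have := AdjoinRoot.mk_self (f := (Polynomial.X ^ 2 + Polynomial.X + 1 : Polynomial ℤ_[3]))
  simpa [xi, map_add, map_pow, AdjoinRoot.mk_X] using this

lemma piu_sq : piu ^ 2 = 3 * (-xi) := by
  unfold piu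
  linear_combination xi_eq

lemma xi_isUnit : IsUnit (-xi) := by
  refine IsUnit.of_mul_eq_one (1 + xi) ?_
  linear_combination -xi_eq

lemma piu_sq_dvd_iff (x : Rxi) : piu ^ 2 ∣ x ↔ (3 : Rxi) ∣ x := by
  rw [piu_sq]
  exact (associated_mul_unit_left (3 : Rxi) _ xi_isUnit).dvd_iff_dvd_left

noncomputable def pB : PowerBasis ℤ_[3] Rxi := AdjoinRoot.powerBasis' monic_f

lemma three_Rxi_eq : (3 : Rxi) = algebraMap ℤ_[3] Rxi 3 :=
  (map_ofNat (algebraMap ℤ_[3] Rxi) 3).symm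

lemma three_regular {x : Rxi} (h : 3 * x = 0) : x = 0 := by
  haveI := pB.basis.isTorsionFree
  rw [three_Rxi_eq, ← Algebra.smul_def] at h
  rcases smul_eq_zero.mp h with h3 | hx
  · exact absurd h3 (by norm_num)
  · exact hx

lemma three_pow_regular (n : ℕ) : ∀ {x : Rxi}, 3 ^ n * x = 0 → x = 0 := by
  induction n with
  | zero => intro x h; simpa using h
  | succ k ih =>
    intro x h
    have h2 : (3:Rxi) ^ k * (3 * x) = 0 := by rw [← mul_assoc, ← pow_succ]; exact h
    exact three_regular (ih h2)

lemma exists_bound (x : Rxi) (hx : x ≠ 0) : ∃ N : ℕ, ∀ n : ℕ, (3 : Rxi) ^ n ∣ x → n ≤ N := by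
  have hrepr : pB.basis.repr x ≠ 0 := fun h => hx (by simpa using pB.basis.repr.injective (h.trans (map_zero _).symm))
  obtain ⟨i, hi⟩ : ∃ i, pB.basis.repr x i ≠ 0 := by
    by_contra hc
    push_neg at hc
    exact hrepr (Finsupp.ext hc)
  refine ⟨(pB.basis.repr x i).valuation, fun n ⟨y, hy⟩ => ?_⟩
  have hxy : x = (3 : ℤ_[3]) ^ n • y := by
    rw [hy, Algebra.smul_def, map_pow, ← three_Rxi_eq]
  have : (3 : ℤ_[3]) ^ n ∣ pB.basis.repr x i := by
    rw [hxy, map_smul]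
    exact ⟨pB.basis.repr y i, by simp [smul_eq_mul]⟩
  have h3 : ((3 : ℕ) : ℤ_[3]) ^ n ∣ pB.basis.repr x i := by exact_mod_cast this
  have := (PadicInt.mem_span_pow_iff_le_valuation _ hi n).mp (Ideal.mem_span_singleton.mpr h3)
  exact this

lemma binom_aux {A : Type*} [Ring A] (x : A) (n : ℕ) :
    ∃ z : A, (1 + x) ^ n = 1 + n • x + x * x * z ∧ Commute x z := by
  induction n with
  | zero => exact ⟨0, by simp, Commute.zero_right x⟩
  | succ k ih =>
    obtain ⟨z, hz, hc⟩ := ih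
    refine ⟨(k : A) + z + z * x, ?_, ?_⟩
    · rw [pow_succ, hz]
      have hk : (k : A) * x = x * (k : A) := (Nat.cast_commute k x).eq
      have hzx : z * x = x * z := hc.symm.eq
      have hsm : ∀ m : ℕ, (m • x : A) = (m : A) * x := fun m => nsmul_eq_mul m x
      rw [hsm, hsm]
      push_cast
      noncomm_ring
      have hk2 : (k : A) * (x * x) = x * (x * (k : A)) := by
        rw [← mul_assoc, hk, mul_assoc, hk]
      rw [hk2]
      abel
    · exact ((Nat.cast_commute k x).symm.add_right hc).add_right (hc.mul_right (Commute.refl x))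

lemma cube_aux {A : Type*} [Ring A] (x : A) :
    (1 + x) ^ 3 = 1 + 3 • x + 3 • (x * x) + x * x * x := by
  have : ∀ y : A, (3 : ℕ) • y = y + y + y := by
    intro y
    rw [show (3:ℕ) = 2 + 1 by rfl, add_nsmul, two_nsmul, one_nsmul]
  rw [this, this]
  noncomm_ring

lemma mat_dvd_mul {m : ℕ} (M N : Matrix (Fin m) (Fin m) Rxi) (a b : Rxi)
    (hM : ∀ i j, a ∣ M i j) (hN : ∀ i j, b ∣ N i j) :
    ∀ i j, a * b ∣ (M * N) i j := by
  intro i j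
  rw [Matrix.mul_apply]
  exact Finset.dvd_sum fun c _ => mul_dvd_mul (hM i c) (hN c j)

lemma mat_dvd_mul_right {m : ℕ} (M N : Matrix (Fin m) (Fin m) Rxi) (a : Rxi)
    (hM : ∀ i j, a ∣ M i j) : ∀ i j, a ∣ (M * N) i j := by
  intro i j
  rw [Matrix.mul_apply]
  exact Finset.dvd_sum fun c _ => (hM i c).mul_right _

/-- The congruence subgroup `GL_m^k(R)`: the kernel of reduction modulo `π^k`. -/
noncomputable def congSubgroup (m k : ℕ) : Subgroup (Matrix (Fin m) (Fin m) Rxi)ˣ :=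
  MonoidHom.ker (Units.map
    ((Ideal.Quotient.mk (Ideal.span {piu ^ k})).mapMatrix.toMonoidHom :
      Matrix (Fin m) (Fin m) Rxi →* Matrix (Fin m) (Fin m) (Rxi ⧸ Ideal.span {piu ^ k})))

/-- The second congruence subgroup `GL_m²(ℤ₃[ξ])`, the kernel of
`GL_m(R) → GL_m(R/π²R)`, is torsion-free. -/
theorem congSubgroup_two_torsionFree (m : ℕ) :
    Monoid.IsTorsionFree (congSubgroup m 2) := by
  classical
  intro g hg1 hfin
  -- reduce to an element of prime order
  have hn0 : 0 < orderOf g := hfin.orderOf_pos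
  have hn1 : orderOf g ≠ 1 := by
    simpa [orderOf_eq_one_iff] using hg1
  set q := (orderOf g).minFac with hqdef
  have hq : q.Prime := Nat.minFac_prime hn1
  set h : congSubgroup m 2 := g ^ (orderOf g / q) with hh
  have hhq : h ^ q = 1 := by
    rw [hh, ← pow_mul, Nat.div_mul_cancel (Nat.minFac_dvd _), pow_orderOf_eq_one]
  have hh1 : h ≠ 1 := by
    intro he
    have hd : orderOf g ∣ orderOf g / q := orderOf_dvd_iff_pow_eq_one.mpr he
    have hpos : 0 < orderOf g / q :=
      Nat.div_pos (Nat.minFac_le hn0) hq.pos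
    have := Nat.le_of_dvd hpos hd
    have := Nat.div_lt_self hn0 hq.one_lt
    omega
  -- pass to matrices
  set M : Matrix (Fin m) (Fin m) Rxi :=
    ((h : (Matrix (Fin m) (Fin m) Rxi)ˣ) : Matrix (Fin m) (Fin m) Rxi) with hMdef
  set X : Matrix (Fin m) (Fin m) Rxi := M - 1 with hXdef
  have hM1X : M = 1 + X := by rw [hXdef]; abel
  have hMq : M ^ q = 1 := by
    have h1 : ((h ^ q : congSubgroup m 2) : (Matrix (Fin m) (Fin m) Rxi)ˣ) = 1 := by
      rw [hhq]; rfl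
    have h2 : (((h : (Matrix (Fin m) (Fin m) Rxi)ˣ) ^ q :
        (Matrix (Fin m) (Fin m) Rxi)ˣ) : Matrix (Fin m) (Fin m) Rxi) = 1 := by
      rw [← SubgroupClass.coe_pow, h1, Units.val_one]
    rw [hMdef, ← Units.val_pow_eq_pow_val]
    exact h2
  have hred : (Ideal.Quotient.mk (Ideal.span {piu ^ 2})).mapMatrix M = 1 := by
    have hmem : (Units.map
        ((Ideal.Quotient.mk (Ideal.span {piu ^ 2})).mapMatrix.toMonoidHom :
          Matrix (Fin m) (Fin m) Rxi →*
            Matrix (Fin m) (Fin m) (Rxi ⧸ Ideal.span {piu ^ 2})))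
        (h : (Matrix (Fin m) (Fin m) Rxi)ˣ) = 1 := h.2
    have := congrArg Units.val hmem
    simpa using this
  have hXdvd : ∀ i j, (3 : Rxi) ∣ X i j := by
    intro i j
    rw [← piu_sq_dvd_iff, ← Ideal.mem_span_singleton, ← Ideal.Quotient.eq_zero_iff_mem]
    have hentry : (Ideal.Quotient.mk (Ideal.span {piu ^ 2})) (M i j)
        = (1 : Matrix (Fin m) (Fin m) (Rxi ⧸ Ideal.span {piu ^ 2})) i j := by
      have := congrArg (fun N => N i j) hred
      simpa [RingHom.mapMatrix_apply, Matrix.map_apply] using this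
    have hone : (Ideal.Quotient.mk (Ideal.span {piu ^ 2})) ((1 : Matrix (Fin m) (Fin m) Rxi) i j)
        = (1 : Matrix (Fin m) (Fin m) (Rxi ⧸ Ideal.span {piu ^ 2})) i j := by
      by_cases hij : i = j <;> simp [Matrix.one_apply, hij]
    rw [hXdef, Matrix.sub_apply, map_sub, hentry, hone, sub_self]
  have hXne : X ≠ 0 := by
    intro h0
    apply hh1
    have hMone : M = 1 := by rwa [hXdef, sub_eq_zero] at h0
    exact Subtype.ext (Units.ext hMone)
  obtain ⟨i₀, j₀, hne⟩ : ∃ i j, X i j ≠ 0 := by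
    by_contra hc
    push_neg at hc
    exact hXne (by ext i j; simpa using hc i j)
  -- the maximal power of 3 dividing X
  set P : ℕ → Prop := fun k => ∀ i j, (3 : Rxi) ^ k ∣ X i j with hPdef
  have hP1 : P 1 := fun i j => by simpa using hXdvd i j
  obtain ⟨N, hN⟩ := exists_bound _ hne
  have hPbd : ∀ k, P k → k ≤ N := fun k hk => hN k (hk i₀ j₀)
  set k := Nat.findGreatest P N with hkdef
  have hPk : P k := Nat.findGreatest_spec (hPbd 1 hP1) hP1
  have hk1 : 1 ≤ k := Nat.le_findGreatest (hPbd 1 hP1) hP1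
  have hnotPk1 : ¬ P (k + 1) :=
    fun hc => (Nat.findGreatest_is_greatest (Nat.lt_succ_self k) (hPbd _ hc)) hc
  apply hnotPk1
  intro i j
  have hXX : ∀ i j, (3 : Rxi) ^ (k + k) ∣ (X * X) i j := by
    intro i j
    rw [pow_add]
    exact mat_dvd_mul X X _ _ hPk hPk i j
  by_cases hq3 : q = 3
  · -- q = 3 : use the cube expansion
    have hcube : (3 • X + 3 • (X * X) + X * X * X : Matrix (Fin m) (Fin m) Rxi) = 0 := by
      have hth : M ^ 3 = 1 + (3 • X + 3 • (X * X) + X * X * X) := by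
        rw [hM1X, cube_aux X]; abel
      rw [hq3] at hMq
      rw [hMq] at hth
      exact (left_eq_add.mp hth)
    have hent : 3 * X i j = -(3 * (X * X) i j + (X * X * X) i j) := by
      have := congrArg (fun N => N i j) hcube
      simp only [Matrix.add_apply, Matrix.smul_apply, Matrix.zero_apply] at this
      simp only [nsmul_eq_mul, Nat.cast_ofNat] at this
      linear_combination this
    have hXXX : (3 : Rxi) ^ (k + k + k) ∣ (X * X * X) i j := by
      rw [pow_add]
      exact mat_dvd_mul (X * X) X _ _ hXX hPk i j
    have hbig : (3 : Rxi) ^ (k + 2) ∣ (3 * (X * X) i j + (X * X * X) i j) := by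
      refine dvd_add ?_ ((pow_dvd_pow 3 (by omega : k + 2 ≤ k + k + k)).trans hXXX)
      refine (pow_dvd_pow (3 : Rxi) (by omega : k + 2 ≤ k + k + 1)).trans ?_
      obtain ⟨c, hc⟩ := hXX i j
      exact ⟨c, by linear_combination 3 * hc⟩
    obtain ⟨w, hw⟩ := hbig
    obtain ⟨y, hy⟩ := hPk i j
    have hcancel : (3 : Rxi) ^ (k + 1) * (y - 3 * (-w)) = 0 := by
      have h2 : 3 * X i j = -((3 : Rxi) ^ (k + 2) * w) := by rw [hent, hw]
      linear_combination h2 - 3 * hy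
    have hy3 : y = 3 * (-w) := by
      have := three_pow_regular (k + 1) hcancel
      linear_combination this
    exact ⟨-w, by linear_combination hy + 3 ^ k * hy3⟩
  · -- q ≠ 3 : q is invertible in Rxi
    obtain ⟨z, hz, -⟩ := binom_aux X q
    have heq : (q • X : Matrix (Fin m) (Fin m) Rxi) + X * X * z = 0 := by
      have h1 : M ^ q = 1 + (q • X + X * X * z) := by rw [hM1X, hz]; abel
      rw [hMq] at h1
      exact (left_eq_add.mp h1)
    have hent : (q : Rxi) * X i j = -((X * X * z) i j) := by
      have := congrArg (fun N => N i j) heq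
      simp only [Matrix.add_apply, Matrix.smul_apply, Matrix.zero_apply] at this
      simp only [nsmul_eq_mul] at this
      linear_combination this
    have hzdvd : (3 : Rxi) ^ (k + 1) ∣ (X * X * z) i j := by
      have := mat_dvd_mul_right (X * X) z ((3 : Rxi) ^ (k + k)) hXX i j
      exact (pow_dvd_pow 3 (by omega : k + 1 ≤ k + k)).trans this
    have hq3dvd : (3 : Rxi) ^ (k + 1) ∣ (q : Rxi) * X i j := by
      rw [hent]
      exact dvd_neg.mpr hzdvd
    have hqz : ¬ ((3 : ℤ) ∣ (q : ℤ)) := by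
      intro hdvd
      have h3q : (3 : ℕ) ∣ q := by exact_mod_cast hdvd
      rcases hq.eq_one_or_self_of_dvd 3 h3q with h | h
      · omega
      · exact hq3 h.symm
    have hnorm : ‖((q : ℤ) : ℤ_[3])‖ = 1 := by
      refine le_antisymm (PadicInt.norm_le_one _) (not_lt.mp fun hlt => hqz ?_)
      exact_mod_cast (PadicInt.norm_int_lt_one_iff_dvd _).mp hlt
    have hu3 : IsUnit ((q : ℕ) : ℤ_[3]) := by
      rw [PadicInt.isUnit_iff]
      have hcast : ((q : ℕ) : ℤ_[3]) = ((q : ℤ) : ℤ_[3]) := by push_cast; ring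
      rw [hcast]
      exact hnorm
    have hu : IsUnit ((q : ℕ) : Rxi) := by
      have := hu3.map (algebraMap ℤ_[3] Rxi)
      rwa [map_natCast] at this
    obtain ⟨u, hu'⟩ := hu
    rw [← hu'] at hq3dvd
    exact Units.dvd_mul_left.mp hq3dvd
end

section
/- Let G be a just-infinite soluble pro-p group of finite rank. Then G is virtually abelian; moreover, the centralizer A of any open abelian normal subgroup B ≅ Z_p^d of G is abelian and self-centralizing in G. -/
open scoped Pointwise

/-- The minimal size of a topological generating set. -/
noncomputable def topGen (G : Type*) [Group G] [TopologicalSpace G] [IsTopologicalGroup G] : ℕ :=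
  sInf {n | ∃ S : Finset G, S.card = n ∧ (Subgroup.closure (S : Set G)).topologicalClosure = ⊤}

/-- Topologically finitely generated. -/
def TopFG (G : Type*) [Group G] [TopologicalSpace G] [IsTopologicalGroup G] : Prop :=
  ∃ S : Finset G, (Subgroup.closure (S : Set G)).topologicalClosure = ⊤

/-- A pro-`p` group: a compact, totally disconnected Hausdorff topological group in which
every open normal subgroup has index a power of `p`. -/
def IsProP (p : ℕ) (G : Type*) [Group G] [TopologicalSpace G] [IsTopologicalGroup G] : Prop :=
  CompactSpace G ∧ TotallyDisconnectedSpace G ∧ T2Space G ∧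
    ∀ N : Subgroup G, N.Normal → IsOpen (N : Set G) → ∃ k : ℕ, N.index = p ^ k

/-- The closed subgroup (topologically) generated by all `p`-th powers. -/
def pPow (p : ℕ) (G : Type*) [Group G] [TopologicalSpace G] [IsTopologicalGroup G] : Subgroup G :=
  (Subgroup.closure {x : G | ∃ g : G, g ^ p = x}).topologicalClosure

/-- The closed subgroup generated by the `p`-th powers of elements of a subgroup `N`. -/
def pPowIn (p : ℕ) {G : Type*} [Group G] [TopologicalSpace G] [IsTopologicalGroup G]
    (N : Subgroup G) : Subgroup G :=
  (Subgroup.closure {x : G | ∃ g ∈ N, g ^ p = x}).topologicalClosure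

/-- Powerful: `[G,G] ≤ G^p` (closures) for odd `p`, and `[G,G] ≤ G^4` for `p = 2`. -/
def Powerful (p : ℕ) (G : Type*) [Group G] [TopologicalSpace G] [IsTopologicalGroup G] : Prop :=
  (commutator G).topologicalClosure ≤ pPow (if p = 2 then 4 else p) G

/-- Uniform: topologically finitely generated, powerful and torsion-free. -/
def Uniform (p : ℕ) (G : Type*) [Group G] [TopologicalSpace G] [IsTopologicalGroup G] : Prop :=
  TopFG G ∧ Powerful p G ∧ Monoid.IsTorsionFree G

/-- Finite rank: a common bound on the number of topological generators of closed subgroups. -/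
def FiniteRank (G : Type*) [Group G] [TopologicalSpace G] [IsTopologicalGroup G] : Prop :=
  ∃ r : ℕ, ∀ H : Subgroup G, IsClosed (H : Set G) → topGen H ≤ r

/-- The dimension of a `p`-adic analytic pro-`p` group: `d(U)` for any uniform open subgroup `U`. -/
noncomputable def dimension (p : ℕ) (G : Type*) [Group G] [TopologicalSpace G]
    [IsTopologicalGroup G] : ℕ :=
  sInf {n | ∃ H : Subgroup G, IsOpen (H : Set G) ∧ Uniform p H ∧ topGen H = n}

/-- Just-infinite: infinite, and every nontrivial closed normal subgroup has finite index. -/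
def JustInfinite (G : Type*) [Group G] [TopologicalSpace G] : Prop :=
  Infinite G ∧ ∀ N : Subgroup G, N.Normal → IsClosed (N : Set G) → N ≠ ⊥ → N.FiniteIndex


section Aux

open Subgroup
open scoped commutatorElement

/-- Central elements pull out of commutators (left slot). -/
lemma comm_center_left_aux {H : Type*} [Group H] (a b z : H) (hz : z ∈ Subgroup.center H) :
    ⁅a * z, b⁆ = ⁅a, b⁆ := by
  have hzb : z * b = b * z := (Subgroup.mem_center_iff.mp hz b).symm
  have h1 : a * z * b * (a * z)⁻¹ = a * b * a⁻¹ := by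
    rw [mul_inv_rev]
    calc a * z * b * (z⁻¹ * a⁻¹) = a * (z * b * z⁻¹) * a⁻¹ := by simp [mul_assoc]
      _ = a * b * a⁻¹ := by rw [hzb, mul_inv_cancel_right]
  rw [commutatorElement_def, commutatorElement_def, h1]

/-- Central elements pull out of commutators (right slot). -/
lemma comm_center_right_aux {H : Type*} [Group H] (a b w : H) (hw : w ∈ Subgroup.center H) :
    ⁅a, b * w⁆ = ⁅a, b⁆ := by
  have hwa : w * a⁻¹ = a⁻¹ * w := (Subgroup.mem_center_iff.mp hw a⁻¹).symm
  rw [commutatorElement_def, commutatorElement_def, mul_inv_rev]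
  calc a * (b * w) * a⁻¹ * (w⁻¹ * b⁻¹) = a * b * (w * a⁻¹ * w⁻¹) * b⁻¹ := by simp [mul_assoc]
    _ = a * b * a⁻¹ * b⁻¹ := by rw [hwa, mul_inv_cancel_right]

/-- If the center has finite index, the commutator set is finite. -/
lemma finite_commutatorSet_of_center_finiteIndex_aux {H : Type*} [Group H]
    [Subgroup.FiniteIndex (Subgroup.center H)] : Finite (commutatorSet H) := by
  set Z := Subgroup.center H
  have : Finite (H ⧸ Z) := Subgroup.finite_quotient_of_finiteIndex
  have hsub : commutatorSet H ⊆
      Set.range (fun q : (H ⧸ Z) × (H ⧸ Z) => ⁅q.1.out, q.2.out⁆) := by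
    rintro x ⟨a, b, rfl⟩
    refine ⟨(QuotientGroup.mk a, QuotientGroup.mk b), ?_⟩
    obtain ⟨z, hz⟩ := QuotientGroup.mk_out_eq_mul Z a
    obtain ⟨w, hw⟩ := QuotientGroup.mk_out_eq_mul Z b
    simp only [hz, hw]
    rw [comm_center_left_aux _ _ _ z.2, comm_center_right_aux _ _ _ w.2]
  exact (Set.Finite.subset (Set.finite_range _) hsub).to_subtype

end Aux

/-- A just-infinite soluble pro-`p` group of finite rank is virtually abelian, and the
centraliser of any open abelian normal subgroup `B ≅ ℤ_p^d` is abelian and self-centralising. -/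
theorem justInfinite_soluble_structure (p : ℕ) [Fact p.Prime]
    (G : Type*) [Group G] [TopologicalSpace G] [IsTopologicalGroup G]
    (hpro : IsProP p G) (hsol : IsSolvable G) (hrk : FiniteRank G)
    (hji : JustInfinite G) :
    (∃ H : Subgroup G, IsOpen (H : Set G) ∧ ∀ a ∈ H, ∀ b ∈ H, a * b = b * a) ∧
      ∀ (d : ℕ) (B : Subgroup G), B.Normal → IsOpen (B : Set G) →
        (∃ e : B ≃* Multiplicative (Fin d → ℤ_[p]), Continuous e ∧ Continuous e.symm) →
        (∀ a ∈ Subgroup.centralizer (B : Set G), ∀ b ∈ Subgroup.centralizer (B : Set G),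
            a * b = b * a) ∧
          Subgroup.centralizer ((Subgroup.centralizer (B : Set G) : Subgroup G) : Set G) =
            Subgroup.centralizer (B : Set G) := by
  classical
  obtain ⟨hcompact, _htd, ht2, _hidx⟩ := hpro
  obtain ⟨hinf, hJI⟩ := hji
  haveI := hcompact
  haveI := ht2
  haveI := hinf
  -- Key: a finite normal subgroup of G must be trivial.
  have key : ∀ N : Subgroup G, N.Normal → Finite N → N = ⊥ := by
    intro N hN hfin
    by_contra hbot
    haveI := hfin
    have hclosed : IsClosed (N : Set G) := (Set.toFinite (N : Set G)).isClosed
    have hfi := hJI N hN hclosed hbot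
    haveI := hfi
    have hcard : Nat.card N * N.index = Nat.card G := N.card_mul_index
    have hne : Nat.card G ≠ 0 := by
      rw [← hcard]
      exact Nat.mul_ne_zero (Nat.card_ne_zero.mpr ⟨⟨1, N.one_mem⟩, hfin⟩) hfi.index_ne_zero
    exact hne (Nat.card_eq_zero_of_infinite)
  constructor
  · -- virtually abelian: closure of last nontrivial term of derived series
    obtain ⟨n, hn⟩ := hsol
    have hex : ∃ m, derivedSeries G m = ⊥ := ⟨n, hn⟩
    set k := Nat.find hex with hkdef
    have hk : derivedSeries G k = ⊥ := Nat.find_spec hex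
    have hk0 : k ≠ 0 := by
      intro h0
      rw [h0, derivedSeries_zero] at hk
      obtain ⟨x, hx⟩ := exists_ne (1 : G)
      exact hx (Subgroup.mem_bot.mp (hk ▸ Subgroup.mem_top x))
    set N := derivedSeries G (k - 1) with hNdef
    have hNbot : N ≠ ⊥ := Nat.find_min hex (Nat.sub_lt (Nat.pos_of_ne_zero hk0) one_pos)
    have hsucc : k - 1 + 1 = k := Nat.succ_pred_eq_of_pos (Nat.pos_of_ne_zero hk0)
    have hNcomm : ⁅N, N⁆ = ⊥ := by
      have := derivedSeries_succ G (k - 1)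
      rw [hsucc, hk] at this
      exact this.symm
    have hNle : N ≤ Subgroup.centralizer (N : Set G) :=
      Subgroup.commutator_eq_bot_iff_le_centralizer.mp hNcomm
    haveI : N.Normal := derivedSeries_normal G _
    set Nc := N.topologicalClosure with hNc
    haveI hNcnorm : Nc.Normal := Subgroup.is_normal_topologicalClosure N
    have hNcbot : Nc ≠ ⊥ := by
      intro h
      exact hNbot (le_bot_iff.mp (h ▸ N.le_topologicalClosure))
    have hfi := hJI Nc hNcnorm N.isClosed_topologicalClosure hNcbot
    haveI := hfi
    have hopen : IsOpen (Nc : Set G) :=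
      Subgroup.isOpen_of_isClosed_of_finiteIndex Nc N.isClosed_topologicalClosure
    have hcomm : ∀ x y : N, x * y = y * x := by
      intro x y
      exact Subtype.ext (Subgroup.mem_centralizer_iff.mp (hNle x.2) y y.2).symm
    letI : CommGroup Nc := N.commGroupTopologicalClosure hcomm
    exact ⟨Nc, hopen, fun a ha b hb =>
      congrArg Subtype.val (mul_comm (⟨a, ha⟩ : Nc) ⟨b, hb⟩)⟩
  · rintro d B hBnorm hBopen ⟨e, -, -⟩
    -- B is abelian
    have hBab : ∀ x ∈ B, ∀ y ∈ B, x * y = y * x := by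
      intro x hx y hy
      have : (⟨x, hx⟩ : B) * ⟨y, hy⟩ = ⟨y, hy⟩ * ⟨x, hx⟩ :=
        e.injective (by rw [map_mul, map_mul, mul_comm])
      exact congrArg Subtype.val this
    set C := Subgroup.centralizer (B : Set G) with hC
    have hBC : B ≤ C := fun x hx =>
      Subgroup.mem_centralizer_iff.mpr fun h hh => hBab h hh x hx
    -- C is normal in G
    haveI hCnorm : C.Normal := by
      constructor
      intro m hm g
      rw [hC, Subgroup.mem_centralizer_iff]
      intro h hh
      have hh' : g⁻¹ * h * g ∈ B := by
        have := hBnorm.conj_mem h hh g⁻¹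
        simpa using this
      have hcm := Subgroup.mem_centralizer_iff.mp hm _ hh'
      have h2 : g * (g⁻¹ * h * g * m) * g⁻¹ = g * (m * (g⁻¹ * h * g)) * g⁻¹ := by
        rw [hcm]
      simpa [mul_assoc] using h2
    -- B has finite index
    haveI : Finite (G ⧸ B) := Subgroup.quotient_finite_of_isOpen B hBopen
    haveI hBfi : B.FiniteIndex := Subgroup.finiteIndex_of_finite_quotient (H := B)
    -- the center of C has finite index in C
    haveI hZfi : (Subgroup.center C).FiniteIndex := by
      have hle : B.subgroupOf C ≤ Subgroup.center C := by
        rintro ⟨x, hxC⟩ hx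
        rw [Subgroup.mem_center_iff]
        rintro ⟨y, hyC⟩
        exact Subtype.ext
          (Subgroup.mem_centralizer_iff.mp hyC x (Subgroup.mem_subgroupOf.mp hx)).symm
      have hfi' : (B.subgroupOf C).FiniteIndex := by
        constructor
        intro h0
        have hrel := Subgroup.relIndex_mul_index hBC
        have hz : B.index = 0 := by
          rw [← hrel, show B.relIndex C = (B.subgroupOf C).index from rfl, h0, zero_mul]
        exact hBfi.index_ne_zero hz
      exact Subgroup.finiteIndex_of_le hle
    haveI : Finite (commutatorSet C) := finite_commutatorSet_of_center_finiteIndex_aux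
    haveI hfinCC : Finite (_root_.commutator C) := inferInstance
    have hmap : Subgroup.map C.subtype (_root_.commutator C) = ⁅C, C⁆ := by
      rw [commutator_def, Subgroup.map_commutator, ← MonoidHom.range_eq_map,
        Subgroup.range_subtype]
    have hfinset : ((⁅C, C⁆ : Subgroup G) : Set G).Finite := by
      rw [← hmap, Subgroup.coe_map]
      exact (Set.toFinite ((_root_.commutator C : Subgroup C) : Set C)).image _
    haveI hccn : (⁅C, C⁆ : Subgroup G).Normal := Subgroup.commutator_normal C C
    have hCCbot : (⁅C, C⁆ : Subgroup G) = ⊥ := key _ hccn hfinset.to_subtype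
    have hCcomm : C ≤ Subgroup.centralizer (C : Set G) :=
      Subgroup.commutator_eq_bot_iff_le_centralizer.mp hCCbot
    refine ⟨fun a ha b hb => ?_, ?_⟩
    · exact Subgroup.mem_centralizer_iff.mp (hCcomm hb) a ha
    · exact le_antisymm (Subgroup.centralizer_le hBC) hCcomm
end

section
/- Suppose p ≥ 3 and let G be a finite p-group such that |G : G^p| = |Ω_1(G)|. If d(G) = log_p |Ω_1(G)|, then G is powerful. -/
/-- The minimal size of a generating set of a group. -/
noncomputable def genNum (G : Type*) [Group G] : ℕ :=
  sInf {n | ∃ S : Finset G, S.card = n ∧ Subgroup.closure (S : Set G) = ⊤}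

/-- `Ω₁(G)`: the subgroup generated by the elements of order dividing `p`. -/
def Omega1 (p : ℕ) (G : Type*) [Group G] : Subgroup G :=
  Subgroup.closure {g : G | g ^ p = 1}

/-- `G^p`: the subgroup generated by the `p`-th powers. -/
def pPowFin (p : ℕ) (G : Type*) [Group G] : Subgroup G :=
  Subgroup.closure {x : G | ∃ g : G, g ^ p = x}

open Subgroup
open scoped commutatorElement

lemma genNum_spec (G : Type*) [Group G] [Finite G] :
    ∃ S : Finset G, S.card = genNum G ∧ Subgroup.closure (S : Set G) = ⊤ := by
  have := Fintype.ofFinite G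
  have hne : {n | ∃ S : Finset G, S.card = n ∧ Subgroup.closure (S : Set G) = ⊤}.Nonempty :=
    ⟨(Finset.univ : Finset G).card, Finset.univ, rfl, by simp⟩
  exact Nat.sInf_mem hne

lemma genNum_le (G : Type*) [Group G] {n : ℕ} {S : Finset G}
    (hS : Subgroup.closure (S : Set G) = ⊤) (hn : S.card ≤ n) : genNum G ≤ n :=
  le_trans (Nat.sInf_le ⟨S, rfl, hS⟩) hn

/-- Lifting a minimal generating set along a surjection. -/
lemma exists_lift {G H : Type*} [Group G] [Group H] [Finite H] (f : G →* H)
    (hf : Function.Surjective f) :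
    ∃ S : Finset G, S.card ≤ genNum H ∧ Subgroup.closure (S : Set G) ⊔ f.ker = ⊤ := by
  obtain ⟨T, hTcard, hTgen⟩ := genNum_spec H
  classical
  refine ⟨T.image (Function.surjInv hf), (Finset.card_image_le).trans hTcard.le, ?_⟩
  set X := Subgroup.closure ((T.image (Function.surjInv hf) : Finset G) : Set G) ⊔ f.ker with hX
  have hker : f.ker ≤ X := le_sup_right
  have hmap : X.map f = ⊤ := by
    rw [hX, Subgroup.map_sup, MonoidHom.map_closure]
    have himg : f '' ((T.image (Function.surjInv hf) : Finset G) : Set G) = (T : Set H) := by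
      ext y
      simp only [Finset.coe_image, Set.image_image, Function.surjInv_eq hf]
      simp
    rw [himg, hTgen]
    simp
  have hcm := Subgroup.comap_map_eq_self hker
  rw [hmap, Subgroup.comap_top] at hcm
  exact hcm.symm

lemma pPowFin_normal (p : ℕ) (G : Type*) [Group G] : (pPowFin p G).Normal := by
  constructor
  intro n hn g
  have hle : (pPowFin p G).map (MulAut.conj g).toMonoidHom ≤ pPowFin p G := by
    rw [pPowFin, MonoidHom.map_closure]
    apply Subgroup.closure_mono
    rintro _ ⟨_, ⟨h, rfl⟩, rfl⟩
    exact ⟨g * h * g⁻¹, by simp [conj_pow]⟩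
  exact hle ⟨n, hn, by simp⟩

universe u

/-- In a finite abelian group of exponent dividing `p`, `p ^ d(Q) ≤ |Q|`. -/
lemma pow_genNum_le (p : ℕ) (hp : p.Prime) :
    ∀ (n : ℕ) (Q : Type u) [Group Q] [Finite Q], Nat.card Q ≤ n →
      (∀ x : Q, x ^ p = 1) → (∀ a b : Q, a * b = b * a) →
      p ^ genNum Q ≤ Nat.card Q := by
  intro n
  induction n with
  | zero => intro Q _ _ hcard _ _; exact absurd hcard (by simpa using Nat.card_pos.ne')
  | succ n ih =>
    intro Q _ _ hcard hpow hcomm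
    by_cases hQ : Nat.card Q = 1
    · have hsub : Subsingleton Q := (Nat.card_eq_one_iff_unique.mp hQ).1
      have h0 : genNum Q ≤ 0 := by
        refine genNum_le Q (S := ∅) ?_ le_rfl
        ext x
        simp [Subsingleton.elim x 1, Subgroup.one_mem]
      have : genNum Q = 0 := Nat.le_zero.mp h0
      rw [this, hQ, pow_zero]
    · -- nontrivial case
      haveI hnt : Nontrivial Q := by
        have h1 : 1 < Nat.card Q := by
          have := Nat.card_pos (α := Q); omega
        exact Finite.one_lt_card_iff_nontrivial.mp h1
      obtain ⟨x, hx⟩ := exists_ne (1 : Q)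
      have hox : orderOf x = p := by
        have hdvd : orderOf x ∣ p := orderOf_dvd_of_pow_eq_one (hpow x)
        rcases (Nat.Prime.eq_one_or_self_of_dvd hp _ hdvd) with h | h
        · exact absurd (orderOf_eq_one_iff.mp h) hx
        · exact h
      set N := Subgroup.zpowers x with hN
      haveI hNnormal : N.Normal := by
        constructor
        intro a ha g
        have hconj : g * a * g⁻¹ = a := by rw [hcomm g a, mul_assoc, mul_inv_cancel, mul_one]
        rwa [hconj]
      have hcardN : Nat.card N = p := by rw [hN, Nat.card_zpowers, hox]
      have hcardQ : Nat.card Q = Nat.card (Q ⧸ N) * p := by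
        rw [Subgroup.card_eq_card_quotient_mul_card_subgroup N, hcardN]
      have hQ'lt : Nat.card (Q ⧸ N) < Nat.card Q := by
        rw [hcardQ]
        exact Nat.lt_mul_iff_one_lt_right Nat.card_pos |>.mpr hp.one_lt
      have hQ'le : Nat.card (Q ⧸ N) ≤ n := by omega
      have hpow' : ∀ y : Q ⧸ N, y ^ p = 1 := by
        intro y
        obtain ⟨a, rfl⟩ := QuotientGroup.mk_surjective y
        rw [← QuotientGroup.mk_pow, hpow a, QuotientGroup.mk_one]
      have hcomm' : ∀ a b : Q ⧸ N, a * b = b * a := by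
        intro a b
        obtain ⟨a, rfl⟩ := QuotientGroup.mk_surjective a
        obtain ⟨b, rfl⟩ := QuotientGroup.mk_surjective b
        rw [← QuotientGroup.mk_mul, ← QuotientGroup.mk_mul, hcomm a b]
      have hih := ih (Q ⧸ N) hQ'le hpow' hcomm'
      obtain ⟨S, hScard, hSgen⟩ :=
        exists_lift (QuotientGroup.mk' N) (QuotientGroup.mk'_surjective N)
      classical
      have hins : Subgroup.closure ((insert x S : Finset Q) : Set Q) = ⊤ := by
        rw [eq_top_iff, ← hSgen]
        apply sup_le
        · apply Subgroup.closure_mono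
          simp
        · rw [QuotientGroup.ker_mk', hN, Subgroup.zpowers_le]
          apply Subgroup.subset_closure
          simp
      have hgen : genNum Q ≤ genNum (Q ⧸ N) + 1 := by
        refine genNum_le Q hins ?_
        calc (insert x S).card ≤ S.card + 1 := Finset.card_insert_le x S
          _ ≤ genNum (Q ⧸ N) + 1 := by omega
      calc p ^ genNum Q ≤ p ^ (genNum (Q ⧸ N) + 1) :=
            Nat.pow_le_pow_right hp.pos hgen
        _ = p ^ genNum (Q ⧸ N) * p := by ring
        _ ≤ Nat.card (Q ⧸ N) * p := Nat.mul_le_mul_right p hih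
        _ = Nat.card Q := hcardQ.symm

/-- For `p ≥ 3`, a finite `p`-group with `|G : G^p| = |Ω₁(G)|` and
`d(G) = log_p |Ω₁(G)|` is powerful. -/
theorem powerful_of_index_eq_omega (p : ℕ) (hp : p.Prime) (hp3 : 3 ≤ p)
    (G : Type*) [Group G] [Finite G] (hG : IsPGroup p G)
    (hio : (pPowFin p G).index = Nat.card (Omega1 p G))
    (hd : p ^ genNum G = Nat.card (Omega1 p G)) :
    commutator G ≤ pPowFin p G := by
  haveI : Fact p.Prime := ⟨hp⟩
  haveI : Finite (Subgroup G) :=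
    Finite.of_injective (fun H : Subgroup G => (H : Set G)) SetLike.coe_injective
  set H := pPowFin p G with hHdef
  haveI : H.Normal := pPowFin_normal p G
  set K := H ⊔ commutator G with hKdef
  haveI : K.Normal := Subgroup.sup_normal H (commutator G)
  -- K is contained in every maximal subgroup, hence in the Frattini subgroup
  have hKfrattini : K ≤ frattini G := by
    rw [frattini, Order.radical]
    refine le_iInf fun M => le_iInf fun hM => ?_
    haveI := hG.isNilpotent
    haveI hMnormal : M.Normal :=
      Subgroup.NormalizerCondition.normal_of_coatom M normalizerCondition_of_isNilpotent hM
    have hQ'p : IsPGroup p (G ⧸ M) := hG.to_quotient M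
    haveI hnt : Nontrivial (G ⧸ M) := by
      obtain ⟨g, hg⟩ := not_forall.mp (fun h => hM.1 ((Subgroup.eq_top_iff' M).mpr h))
      refine ⟨(QuotientGroup.mk' M) g, 1, fun h => hg ?_⟩
      rw [← QuotientGroup.ker_mk' M]
      exact MonoidHom.mem_ker.mpr h
    -- every subgroup of G ⧸ M is trivial
    have key : ∀ N : Subgroup (G ⧸ M), N = ⊥ ∨ N = ⊤ := by
      intro N
      have hle : M ≤ N.comap (QuotientGroup.mk' M) := by
        intro m hm
        simp only [Subgroup.mem_comap]
        have h1 : (QuotientGroup.mk' M) m = 1 := (QuotientGroup.eq_one_iff m).mpr hm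
        rw [h1]; exact N.one_mem
      rcases eq_or_lt_of_le hle with h | h
      · left
        have hmap := Subgroup.map_comap_eq_self_of_surjective
          (QuotientGroup.mk'_surjective M) N
        rw [← hmap, ← h, eq_bot_iff]
        rintro _ ⟨m, hm, rfl⟩
        simpa [Subgroup.mem_bot] using (QuotientGroup.eq_one_iff m).mpr hm
      · right
        have htop := hM.2 _ h
        rw [← Subgroup.map_comap_eq_self_of_surjective (QuotientGroup.mk'_surjective M) N,
          htop]
        exact Subgroup.map_top_of_surjective _ (QuotientGroup.mk'_surjective M)
    -- the quotient has order p
    haveI := Fintype.ofFinite (G ⧸ M)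
    have hdvd : p ∣ Fintype.card (G ⧸ M) := by
      obtain ⟨n, hn⟩ := IsPGroup.iff_card.mp hQ'p
      rw [← Nat.card_eq_fintype_card, hn]
      cases n with
      | zero =>
        rw [pow_zero] at hn
        exact absurd (Nat.card_eq_one_iff_unique.mp hn).1
          (not_subsingleton (G ⧸ M))
      | succ n => exact dvd_pow_self p (Nat.succ_ne_zero n)
    obtain ⟨y, hy⟩ := exists_prime_orderOf_dvd_card p hdvd
    have hy1 : y ≠ 1 := by
      intro h
      rw [h, orderOf_one] at hy
      omega
    have hzy : Subgroup.zpowers y = ⊤ :=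
      (key _).resolve_left (by simpa [Subgroup.zpowers_eq_bot] using hy1)
    have hcardQ' : Nat.card (G ⧸ M) = p := by
      have h1 : Nat.card (Subgroup.zpowers y) = p := by rw [Nat.card_zpowers, hy]
      rw [hzy, Subgroup.card_top] at h1
      exact h1
    have hpowQ' : ∀ z : G ⧸ M, z ^ p = 1 := fun z => by
      rw [← hcardQ']; exact pow_card_eq_one'
    have hcommQ' : ∀ a b : G ⧸ M, a * b = b * a := by
      intro a b
      have ha : a ∈ Subgroup.zpowers y := hzy ▸ Subgroup.mem_top a
      have hb : b ∈ Subgroup.zpowers y := hzy ▸ Subgroup.mem_top b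
      obtain ⟨i, rfl⟩ := Subgroup.mem_zpowers_iff.mp ha
      obtain ⟨j, rfl⟩ := Subgroup.mem_zpowers_iff.mp hb
      rw [← zpow_add, ← zpow_add, add_comm]
    -- conclude K ≤ M
    rw [hKdef]
    apply sup_le
    · rw [hHdef, pPowFin, Subgroup.closure_le]
      rintro _ ⟨g, rfl⟩
      have hker : (QuotientGroup.mk' M) (g ^ p) = 1 := by
        rw [map_pow]; exact hpowQ' _
      have := MonoidHom.mem_ker.mpr hker
      rwa [QuotientGroup.ker_mk'] at this
    · rw [commutator_def, Subgroup.commutator_le]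
      intro g₁ _ g₂ _
      have hker : (QuotientGroup.mk' M) ⁅g₁, g₂⁆ = 1 := by
        rw [map_commutatorElement]
        exact commutatorElement_eq_one_iff_mul_comm.mpr (hcommQ' _ _)
      have := MonoidHom.mem_ker.mpr hker
      rwa [QuotientGroup.ker_mk'] at this
  -- Burnside basis argument: genNum G ≤ genNum (G ⧸ K)
  obtain ⟨S, hScard, hSgen⟩ :=
    exists_lift (QuotientGroup.mk' K) (QuotientGroup.mk'_surjective K)
  rw [QuotientGroup.ker_mk'] at hSgen
  have hfr : Subgroup.closure (S : Set G) ⊔ frattini G = ⊤ := by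
    rw [eq_top_iff, ← hSgen]
    exact sup_le_sup_left hKfrattini _
  have hStop : Subgroup.closure (S : Set G) = ⊤ := frattini_nongenerating hfr
  have hgen : genNum G ≤ genNum (G ⧸ K) := genNum_le G hStop hScard
  -- the quotient G ⧸ K is abelian of exponent p
  have hpowK : ∀ z : G ⧸ K, z ^ p = 1 := by
    intro z
    obtain ⟨g, rfl⟩ := QuotientGroup.mk'_surjective K z
    rw [← map_pow]
    refine MonoidHom.mem_ker.mp ?_
    rw [QuotientGroup.ker_mk']
    exact le_sup_left (a := H) (b := commutator G) (Subgroup.subset_closure ⟨g, rfl⟩)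
  have hcommK : ∀ a b : G ⧸ K, a * b = b * a := by
    intro a b
    obtain ⟨g₁, rfl⟩ := QuotientGroup.mk'_surjective K a
    obtain ⟨g₂, rfl⟩ := QuotientGroup.mk'_surjective K b
    refine commutatorElement_eq_one_iff_mul_comm.mp ?_
    have hmem : ⁅g₁, g₂⁆ ∈ K :=
      le_sup_right (a := H) (b := commutator G)
        (Subgroup.commutator_mem_commutator (Subgroup.mem_top g₁) (Subgroup.mem_top g₂))
    rw [← map_commutatorElement]
    refine MonoidHom.mem_ker.mp ?_
    rw [QuotientGroup.ker_mk']
    exact hmem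
  have haux : p ^ genNum (G ⧸ K) ≤ Nat.card (G ⧸ K) :=
    pow_genNum_le p hp (Nat.card (G ⧸ K)) (G ⧸ K) le_rfl hpowK hcommK
  -- index comparison
  have hHK : H ≤ K := le_sup_left
  have hHindex : H.index = p ^ genNum G := hio.trans hd.symm
  have hKindex : K.index = Nat.card (G ⧸ K) := Subgroup.index_eq_card K
  have hchain : H.index ≤ K.index := by
    rw [hHindex, hKindex]
    calc p ^ genNum G ≤ p ^ genNum (G ⧸ K) := Nat.pow_le_pow_right hp.pos hgen
      _ ≤ Nat.card (G ⧸ K) := haux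
  have hrel := Subgroup.relIndex_mul_index hHK
  have hKpos : 0 < K.index := Nat.pos_of_ne_zero K.index_ne_zero_of_finite
  have hHpos : 0 < H.index := by rw [hHindex]; exact Nat.pow_pos hp.pos
  have hrel1 : H.relIndex K = 1 := by nlinarith [hrel, hchain, hKpos, hHpos]
  have hKH : K ≤ H := Subgroup.relIndex_eq_one.mp hrel1
  exact le_trans (le_sup_right (a := H)) hKH
end

section
/- Let p ≥ 3 and let G = ⟨b⟩ ⋉ A be a pro-p group, where A ≅ Z_p^{d-1} (written additively), ⟨b⟩ ≅ Z_p, and b acts on A as multiplication by 1 + p^s for some s ≥ 1. Then every open subgroup of G is powerful; in particular G is hereditarily uniform. -/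
open scoped Pointwise

section Helpers

variable {p : ℕ} [Fact p.Prime]

/-- A closed additive subgroup of a topological `ℤ_[p]`-module is stable under scalars. -/
lemma aux_smul_mem_of_isClosed {M : Type*} [AddCommGroup M] [Module ℤ_[p] M]
    [TopologicalSpace M] [IsTopologicalAddGroup M] [ContinuousSMul ℤ_[p] M]
    (S : AddSubgroup M) (hS : IsClosed (S : Set M)) (z : ℤ_[p]) {v : M} (hv : v ∈ S) :
    z • v ∈ S := by
  have hcont : Continuous fun c : ℤ_[p] => c • v := continuous_id.smul continuous_const
  have hz : z ∈ closure (Set.range (Int.cast : ℤ → ℤ_[p])) := by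
    rw [PadicInt.denseRange_intCast.closure_range]; trivial
  have := map_mem_closure hcont hz (t := (S : Set M)) ?_
  · rwa [hS.closure_eq] at this
  · rintro x ⟨n, rfl⟩
    simpa [Int.cast_smul_eq_zsmul] using S.zsmul_mem hv n

/-- A closed additive subgroup of `ℤ_[p]` is a principal ideal. -/
lemma aux_exists_gen (S : AddSubgroup ℤ_[p]) (hS : IsClosed (S : Set ℤ_[p])) :
    ∃ c ∈ S, ∀ x ∈ S, ∃ z : ℤ_[p], x = z * c := by
  let I : Ideal ℤ_[p] :=
    { carrier := S
      add_mem' := fun ha hb => S.add_mem ha hb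
      zero_mem' := S.zero_mem
      smul_mem' := fun c {x} hx => by
        simpa [smul_eq_mul] using aux_smul_mem_of_isClosed S hS c hx }
  obtain ⟨c, hc⟩ := (IsPrincipalIdealRing.principal I).principal
  refine ⟨c, ?_, fun x hx => ?_⟩
  · have : c ∈ I := hc ▸ Ideal.mem_span_singleton_self c
    exact this
  · have hxI : x ∈ I := hx
    rw [hc] at hxI
    obtain ⟨z, hz⟩ := Submodule.mem_span_singleton.mp hxI
    exact ⟨z, by simpa [smul_eq_mul] using hz.symm⟩

/-- `1 + p * z` is invertible with inverse of the same shape. -/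
lemma aux_exists_inv (z : ℤ_[p]) : ∃ w : ℤ_[p], (1 + p * z) * (1 + p * w) = 1 := by
  have hplt : ‖(p : ℤ_[p]) * z‖ < 1 := by
    calc ‖(p : ℤ_[p]) * z‖ = ‖(p : ℤ_[p])‖ * ‖z‖ := by rw [norm_mul]
    _ ≤ ‖(p : ℤ_[p])‖ * 1 := by
        exact mul_le_mul_of_nonneg_left (PadicInt.norm_le_one z) (norm_nonneg _)
    _ < 1 := by
        rw [mul_one, PadicInt.norm_p]
        have hp2 : (2 : ℝ) ≤ (p : ℝ) := by exact_mod_cast (Fact.out : p.Prime).two_le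
        rw [inv_lt_one_iff₀]; right; linarith
  have hu : IsUnit (1 + (p : ℤ_[p]) * z) := by
    rw [PadicInt.isUnit_iff]
    rw [PadicInt.norm_add_eq_max_of_ne (by rw [norm_one]; exact (ne_of_lt hplt).symm), norm_one]
    exact max_eq_left hplt.le
  obtain ⟨u, hu⟩ := hu
  have h1 : (1 + (p : ℤ_[p]) * z) * (u⁻¹ : ℤ_[p]ˣ) = 1 := by rw [← hu]; exact u.mul_inv
  refine ⟨-(z * (u⁻¹ : ℤ_[p]ˣ)), ?_⟩
  have h2 : (1 : ℤ_[p]) + p * -(z * (u⁻¹ : ℤ_[p]ˣ)) = (u⁻¹ : ℤ_[p]ˣ) := by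
    have := h1
    ring_nf at this ⊢
    linear_combination -this
  rw [h2, h1]

end Helpers

set_option maxHeartbeats 2000000 in
/-- Corollary 1.10 / Theorem 1.9 (sufficiency): for `p ≥ 3`, the pro-`p` group
`G = ⟨b⟩ ⋉ A` with `⟨b⟩ ≅ ℤ_p`, `A ≅ ℤ_p^{d-1}` and `b` acting on `A` as multiplication by
`1 + p^s` (`s ≥ 1`) is hereditarily powerful, indeed hereditarily uniform. -/
theorem hereditarily_uniform (p : ℕ) [Fact p.Prime] (hp3 : 3 ≤ p) (s : ℕ) (hs : 1 ≤ s)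
    (d : ℕ) (hd : 2 ≤ d)
    (G : Type*) [Group G] [TopologicalSpace G] [IsTopologicalGroup G] (hpro : IsProP p G)
    (A : Subgroup G) (hA : A.Normal) (b : G)
    (eA : A ≃* Multiplicative (Fin (d - 1) → ℤ_[p]))
    (heA : Continuous eA) (heA' : Continuous eA.symm)
    (eB : (Subgroup.closure {b}).topologicalClosure ≃* Multiplicative ℤ_[p])
    (heB : Continuous eB) (heB' : Continuous eB.symm)
    (hsup : (Subgroup.closure {b}).topologicalClosure ⊔ A = ⊤)
    (hinf : (Subgroup.closure {b}).topologicalClosure ⊓ A = ⊥)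
    (hact : ∀ a : A, eA ⟨b * a * b⁻¹, hA.conj_mem a a.2 b⟩ =
      Multiplicative.ofAdd ((1 + (p : ℤ_[p]) ^ s) • Multiplicative.toAdd (eA a))) :
    ∀ H : Subgroup G, IsOpen (H : Set G) → Powerful p H ∧ Uniform p H := by
  classical
  obtain ⟨hcompG, htdG, ht2G, hindexG⟩ := hpro
  haveI := hcompG
  haveI := ht2G
  haveI := hA
  -- coordinates on A
  set f : A → (Fin (d - 1) → ℤ_[p]) := fun a => Multiplicative.toAdd (eA a) with hf
  have hfmul : ∀ a a' : A, f (a * a') = f a + f a' := by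
    intro a a'; simp [hf, map_mul]
  have hfone : f 1 = 0 := by simp [hf]
  have hfinv : ∀ a : A, f a⁻¹ = -(f a) := by
    intro a; simp [hf, map_inv]
  have hfinj : Function.Injective f := by
    intro a a' haa'
    exact eA.injective (by simpa [hf] using congrArg Multiplicative.ofAdd haa')
  have hfpow : ∀ (a : A) (n : ℕ), f (a ^ n) = n • f a := by
    intro a n; simp [hf, map_pow]
  have hfcont : Continuous f := continuous_toAdd.comp heA
  have habel : ∀ a a' : A, (a : G) * a' = a' * a := by
    intro a a'
    have : a * a' = a' * a := eA.injective (by rw [map_mul, map_mul, mul_comm])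
    exact_mod_cast congrArg (Subtype.val) this
  have conjmem : ∀ (x : G) (a : A), x * ↑a * x⁻¹ ∈ A := fun x a => hA.conj_mem a a.2 x
  -- A is a closed (hence compact) subgroup
  have hAcl : IsClosed (A : Set G) := by
    have hrange : (A : Set G)
        = Set.range (fun v : Fin (d - 1) → ℤ_[p] => ((eA.symm (Multiplicative.ofAdd v) : A) : G)) := by
      ext g
      constructor
      · intro hg
        exact ⟨Multiplicative.toAdd (eA ⟨g, hg⟩), by simp⟩
      · rintro ⟨v, rfl⟩
        exact (eA.symm (Multiplicative.ofAdd v)).2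
    rw [hrange]
    exact (isCompact_range (continuous_subtype_val.comp
      (heA'.comp continuous_ofAdd))).isClosed
  haveI : CompactSpace A := isCompact_iff_compactSpace.mp (hAcl.isCompact)
  -- the conjugation-scalar lemma : every element of G acts on A by a scalar in 1 + pℤ_p
  have key : ∀ (x : G) (a : A), ∃ z : ℤ_[p],
      f ⟨x * ↑a * x⁻¹, conjmem x a⟩ = (1 + (p : ℤ_[p]) * z) • f a := by
    set P : G → Prop := fun x => ∀ a : A, ∃ z : ℤ_[p],
      f ⟨x * ↑a * x⁻¹, conjmem x a⟩ = (1 + (p : ℤ_[p]) * z) • f a with hP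
    have honeP : P 1 := by
      intro a
      refine ⟨0, ?_⟩
      have h1 : (⟨(1:G) * ↑a * (1:G)⁻¹, conjmem 1 a⟩ : A) = a := Subtype.ext (by group)
      rw [h1]; simp
    have hmulP : ∀ x y, P x → P y → P (x * y) := by
      intro x y hx hy a
      obtain ⟨z₁, hz₁⟩ := hy a
      obtain ⟨z₂, hz₂⟩ := hx ⟨y * ↑a * y⁻¹, conjmem y a⟩
      refine ⟨z₁ + z₂ + p * (z₂ * z₁), ?_⟩
      have he : (⟨x * y * ↑a * (x * y)⁻¹, conjmem (x * y) a⟩ : A)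
          = ⟨x * ↑(⟨y * ↑a * y⁻¹, conjmem y a⟩ : A) * x⁻¹, conjmem x _⟩ := by
        apply Subtype.ext
        show x * y * ↑a * (x * y)⁻¹ = x * (y * ↑a * y⁻¹) * x⁻¹
        group
      rw [he, hz₂, hz₁, smul_smul]
      congr 1
      ring
    have hinvP : ∀ x, P x → P x⁻¹ := by
      intro x hx a
      obtain ⟨z, hz⟩ := hx ⟨x⁻¹ * ↑a * x⁻¹⁻¹, conjmem x⁻¹ a⟩
      obtain ⟨w, hw⟩ := aux_exists_inv (p := p) z
      refine ⟨w, ?_⟩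
      have he : (⟨x * ↑(⟨x⁻¹ * ↑a * x⁻¹⁻¹, conjmem x⁻¹ a⟩ : A) * x⁻¹, conjmem x _⟩ : A) = a := by
        apply Subtype.ext
        show x * (x⁻¹ * ↑a * x⁻¹⁻¹) * x⁻¹ = ↑a
        group
      rw [he] at hz
      rw [hz, smul_smul, mul_comm, hw, one_smul]
    -- the set of such x is a closed subgroup containing b and A
    have hclosedP : IsClosed {x : G | P x} := by
      have hrw : {x : G | P x} = ⋂ a : A,
          (fun x : G => f ⟨x * ↑a * x⁻¹, conjmem x a⟩) ⁻¹'
            (Set.range fun z : ℤ_[p] => (1 + (p : ℤ_[p]) * z) • f a) := by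
        ext x
        simp only [hP, Set.mem_setOf_eq, Set.mem_iInter, Set.mem_preimage, Set.mem_range]
        exact ⟨fun h a => (h a).imp (fun z hz => hz.symm),
               fun h a => (h a).imp (fun z hz => hz.symm)⟩
      rw [hrw]
      refine isClosed_iInter fun a => IsClosed.preimage ?_ ?_
      · exact hfcont.comp (Continuous.subtype_mk
          (show Continuous fun x : G => x * ↑a * x⁻¹ by fun_prop) _)
      · exact (isCompact_range
          ((continuous_const.add (continuous_const.mul continuous_id)).smul
            continuous_const)).isClosed
    have hbP : P b := by
      intro a
      refine ⟨(p : ℤ_[p]) ^ (s - 1), ?_⟩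
      have h1 : f ⟨b * ↑a * b⁻¹, conjmem b a⟩ = (1 + (p : ℤ_[p]) ^ s) • f a := by
        have := hact a
        simp only [hf]
        rw [this]
        simp
      rw [h1]
      congr 1
      have : (p : ℤ_[p]) ^ s = p * p ^ (s - 1) := by
        conv_lhs => rw [show s = 1 + (s - 1) by omega]
        rw [pow_add, pow_one]
      rw [this]
    have hAsubP : ∀ a' : A, P (a' : G) := by
      intro a' a
      refine ⟨0, ?_⟩
      have h1 : (⟨(a' : G) * ↑a * (↑a')⁻¹, conjmem (a' : G) a⟩ : A) = a := by
        apply Subtype.ext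
        show (a' : G) * ↑a * (↑a')⁻¹ = ↑a
        rw [habel a' a, mul_assoc, mul_inv_cancel, mul_one]
      rw [h1]; simp
    set W : Subgroup G :=
      { carrier := {x : G | P x}
        one_mem' := honeP
        mul_mem' := fun hx hy => hmulP _ _ hx hy
        inv_mem' := fun hx => hinvP _ hx } with hW
    have hWtop : (⊤ : Subgroup G) ≤ W := by
      rw [← hsup]
      refine sup_le ?_ (fun a' ha' => hAsubP ⟨a', ha'⟩)
      refine Subgroup.topologicalClosure_minimal _ ?_ hclosedP
      rw [Subgroup.closure_le]
      intro x hx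
      rw [Set.mem_singleton_iff] at hx
      subst hx
      exact hbP
    intro x a
    exact hWtop (Subgroup.mem_top x) a
  -- the projection ρ : G → ℤ_p with kernel A
  obtain ⟨ρ, hρc, hρker⟩ : ∃ ρ : G →* Multiplicative ℤ_[p],
      Continuous ρ ∧ ∀ g : G, (ρ g = 1 ↔ g ∈ A) := by
    haveI : IsClosed (A : Set G) := hAcl
    have hBc : IsClosed ((Subgroup.closure {b}).topologicalClosure : Set G) :=
      Subgroup.isClosed_topologicalClosure _
    haveI : CompactSpace (Subgroup.closure {b}).topologicalClosure :=
      isCompact_iff_compactSpace.mp (hBc.isCompact)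
    set q : G →* G ⧸ A := QuotientGroup.mk' A with hq
    have hqc : Continuous q := continuous_quot_mk
    set φ₀ : (Subgroup.closure {b}).topologicalClosure →* G ⧸ A :=
      q.comp (Subgroup.closure {b}).topologicalClosure.subtype with hφ₀
    have hinj : Function.Injective φ₀ := by
      rw [injective_iff_map_eq_one]
      intro x hx
      have hxA : (x : G) ∈ A := (QuotientGroup.eq_one_iff _).mp hx
      have hxBA : (x : G) ∈ (Subgroup.closure {b}).topologicalClosure ⊓ A := ⟨x.2, hxA⟩
      rw [hinf] at hxBA
      exact Subtype.ext hxBA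
    have hsurj : Function.Surjective φ₀ := by
      intro y
      obtain ⟨g, rfl⟩ := QuotientGroup.mk'_surjective A y
      have hg : g ∈ (((Subgroup.closure {b}).topologicalClosure : Set G) * (A : Set G)) := by
        rw [← Subgroup.mul_normal _ A, hsup]
        trivial
      obtain ⟨c, hc, a, ha, rfl⟩ := hg
      refine ⟨⟨c, hc⟩, ?_⟩
      show q c = q (c * a)
      rw [map_mul]
      have : q a = 1 := (QuotientGroup.eq_one_iff a).mpr ha
      rw [this, mul_one]
    set φ : (Subgroup.closure {b}).topologicalClosure ≃* G ⧸ A :=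
      MulEquiv.ofBijective φ₀ ⟨hinj, hsurj⟩ with hφ
    have hφc : Continuous φ := hqc.comp continuous_subtype_val
    have hφsymmc : Continuous φ.symm :=
      (Continuous.homeoOfEquivCompactToT2 (f := φ.toEquiv) hφc).symm.continuous
    refine ⟨eB.toMonoidHom.comp ((φ.symm : G ⧸ A ≃* _).toMonoidHom.comp q), ?_, ?_⟩
    · show Continuous fun g : G => eB (φ.symm (q g))
      exact Continuous.comp heB
        (Continuous.comp hφsymmc hqc : Continuous fun g : G => φ.symm (q g))
    · intro g
      simp only [MonoidHom.comp_apply, MulEquiv.coe_toMonoidHom]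
      constructor
      · intro hg
        have h1 : φ.symm (q g) = 1 := by
          apply eB.injective
          rw [hg, map_one]
        have h2 : q g = 1 := by
          have := congrArg φ h1
          rw [MulEquiv.apply_symm_apply, map_one] at this
          exact this
        exact (QuotientGroup.eq_one_iff g).mp h2
      · intro hg
        have : q g = 1 := (QuotientGroup.eq_one_iff g).mpr hg
        rw [this, map_one, map_one]
  -- now fix an open subgroup H
  intro H hHopen
  have hHcl : IsClosed (H : Set G) := Subgroup.isClosed_of_isOpen H hHopen
  haveI : CompactSpace H := isCompact_iff_compactSpace.mp hHcl.isCompact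
  -- the coordinate module of A ∩ H
  set Mv : AddSubgroup (Fin (d - 1) → ℤ_[p]) :=
    { carrier := {v | ∃ a : A, (a : G) ∈ H ∧ f a = v}
      zero_mem' := ⟨1, by simpa using H.one_mem, hfone⟩
      add_mem' := by
        rintro v w ⟨a, haH, rfl⟩ ⟨a', ha'H, rfl⟩
        exact ⟨a * a', by simpa using H.mul_mem haH ha'H, hfmul a a'⟩
      neg_mem' := by
        rintro v ⟨a, haH, rfl⟩
        exact ⟨a⁻¹, by simpa using H.inv_mem haH, hfinv a⟩ } with hMv
  have hMvcl : IsClosed (Mv : Set (Fin (d - 1) → ℤ_[p])) := by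
    have h1 : (Mv : Set (Fin (d - 1) → ℤ_[p])) = f '' (Subtype.val ⁻¹' (H : Set G)) := by
      ext v
      constructor
      · rintro ⟨a, haH, rfl⟩; exact ⟨a, haH, rfl⟩
      · rintro ⟨a, haH, rfl⟩; exact ⟨a, haH, rfl⟩
    rw [h1]
    exact (((hHcl.preimage continuous_subtype_val).isCompact).image hfcont).isClosed
  have hMvsmul : ∀ (z : ℤ_[p]) {v}, v ∈ Mv → z • v ∈ Mv :=
    fun z v hv => aux_smul_mem_of_isClosed Mv hMvcl z hv
  -- the set of p-th powers of elements of A ∩ H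
  set PM : Set G :=
    {g | ∃ a : A, (a : G) = g ∧ (a : G) ∈ H ∧ ∃ v ∈ Mv, f a = (p : ℤ_[p]) • v} with hPM
  have hPMcl : IsClosed PM := by
    have h1 : IsCompact ((fun v : Fin (d - 1) → ℤ_[p] => (p : ℤ_[p]) • v) '' (Mv : Set (Fin (d - 1) → ℤ_[p]))) :=
      (hMvcl.isCompact).image (show Continuous fun v : Fin (d - 1) → ℤ_[p] => (p : ℤ_[p]) • v by fun_prop)
    have h2 : IsClosed {a : A | (a : G) ∈ H ∧ ∃ v ∈ Mv, f a = (p : ℤ_[p]) • v} := by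
      have he : {a : A | (a : G) ∈ H ∧ ∃ v ∈ Mv, f a = (p : ℤ_[p]) • v}
          = (Subtype.val ⁻¹' (H : Set G)) ∩
            (f ⁻¹' ((fun v => (p : ℤ_[p]) • v) '' (Mv : Set (Fin (d - 1) → ℤ_[p])))) := by
        ext a
        simp only [Set.mem_inter_iff, Set.mem_preimage, Set.mem_setOf_eq, Set.mem_image]
        constructor
        · rintro ⟨hh, v, hv, hev⟩; exact ⟨hh, v, hv, hev.symm⟩
        · rintro ⟨hh, v, hv, hev⟩; exact ⟨hh, v, hv, hev.symm⟩
      rw [he]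
      exact (hHcl.preimage continuous_subtype_val).inter (h1.isClosed.preimage hfcont)
    have h3 : PM = Subtype.val '' {a : A | (a : G) ∈ H ∧ ∃ v ∈ Mv, f a = (p : ℤ_[p]) • v} := by
      ext g
      simp only [hPM, Set.mem_setOf_eq, Set.mem_image]
      constructor
      · rintro ⟨a, rfl, hh⟩; exact ⟨a, hh, rfl⟩
      · rintro ⟨a, hh, rfl⟩; exact ⟨a, rfl, hh⟩
    rw [h3]
    exact ((h2.isCompact).image continuous_subtype_val).isClosed
  have hPMmul : ∀ {g g' : G}, g ∈ PM → g' ∈ PM → g * g' ∈ PM := by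
    rintro _ _ ⟨a, rfl, haH, v, hv, hfa⟩ ⟨a', rfl, ha'H, v', hv', hfa'⟩
    refine ⟨a * a', by push_cast; ring, by push_cast; exact H.mul_mem haH ha'H,
      v + v', Mv.add_mem hv hv', ?_⟩
    rw [hfmul, hfa, hfa', smul_add]
  have hPMinv : ∀ {g : G}, g ∈ PM → g⁻¹ ∈ PM := by
    rintro _ ⟨a, rfl, haH, v, hv, hfa⟩
    refine ⟨a⁻¹, by push_cast; ring, by push_cast; exact H.inv_mem haH,
      -v, Mv.neg_mem hv, ?_⟩
    rw [hfinv, hfa, smul_neg]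
  have hPMconj : ∀ {g w : G}, g ∈ H → w ∈ PM → g * w * g⁻¹ ∈ PM := by
    rintro g _ hgH ⟨a, rfl, haH, v, hv, hfa⟩
    obtain ⟨a₀, ha₀H, rfl⟩ := hv
    have hap : a = a₀ ^ p := by
      apply hfinj
      rw [hfa, hfpow, Nat.cast_smul_eq_nsmul]
    set a₁ : A := ⟨g * ↑a₀ * g⁻¹, conjmem g a₀⟩ with ha₁
    have ha₁H : (a₁ : G) ∈ H := H.mul_mem (H.mul_mem hgH ha₀H) (H.inv_mem hgH)
    have hcoe : ((a₁ ^ p : A) : G) = g * ↑a * g⁻¹ := by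
      push_cast [hap]
      show (g * ↑a₀ * g⁻¹) ^ p = g * (↑a₀ : G) ^ p * g⁻¹
      have := map_pow (MulAut.conj g) (↑a₀ : G) p
      simpa [MulAut.conj_apply] using this
    refine ⟨a₁ ^ p, hcoe, ?_, f a₁, ⟨a₁, ha₁H, rfl⟩, ?_⟩
    · rw [hcoe]
      exact H.mul_mem (H.mul_mem hgH haH) (H.inv_mem hgH)
    · rw [hfpow, Nat.cast_smul_eq_nsmul]
  have hPMcommA : ∀ x : G, x ∈ H → ∀ a : A, (a : G) ∈ H →
      x * ↑a * x⁻¹ * (↑a)⁻¹ ∈ PM := by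
    intro x hxH a haH
    obtain ⟨z, hz⟩ := key x a
    refine ⟨⟨x * ↑a * x⁻¹, conjmem x a⟩ * a⁻¹, by push_cast; ring,
      by push_cast; exact H.mul_mem (H.mul_mem (H.mul_mem hxH haH) (H.inv_mem hxH)) (H.inv_mem haH),
      z • f a, hMvsmul z ⟨a, haH, rfl⟩, ?_⟩
    rw [hfmul, hfinv, hz]
    have h1 : (1 + (p : ℤ_[p]) * z) • f a + -(f a) = ((p : ℤ_[p]) * z) • f a := by
      rw [add_smul, one_smul]; abel
    rw [h1, mul_smul]
  -- the image of H in ℤ_p and a generator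
  set Sρ : AddSubgroup ℤ_[p] :=
    { carrier := {c | ∃ g ∈ H, Multiplicative.toAdd (ρ g) = c}
      zero_mem' := ⟨1, H.one_mem, by rw [map_one]; rfl⟩
      add_mem' := by
        rintro c c' ⟨g, hg, rfl⟩ ⟨g', hg', rfl⟩
        exact ⟨g * g', H.mul_mem hg hg', by rw [map_mul]; rfl⟩
      neg_mem' := by
        rintro c ⟨g, hg, rfl⟩
        exact ⟨g⁻¹, H.inv_mem hg, by rw [map_inv]; rfl⟩ } with hSρ
  have hSρcl : IsClosed (Sρ : Set ℤ_[p]) := by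
    have h1 : (Sρ : Set ℤ_[p])
        = (fun g : H => Multiplicative.toAdd (ρ (g : G))) '' Set.univ := by
      ext c
      constructor
      · rintro ⟨g, hg, rfl⟩; exact ⟨⟨g, hg⟩, trivial, rfl⟩
      · rintro ⟨⟨g, hg⟩, -, rfl⟩; exact ⟨g, hg, rfl⟩
    rw [h1]
    exact ((isCompact_univ).image
      (continuous_toAdd.comp (hρc.comp continuous_subtype_val))).isClosed
  obtain ⟨c₀, hc₀S, hgen⟩ := aux_exists_gen Sρ hSρcl
  obtain ⟨h, hhH, hρh⟩ := hc₀S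
  -- the subgroup generated by h and A ∩ H
  set K : Subgroup G :=
    { carrier := {g : G | ∃ (n : ℤ) (a : A), (a : G) ∈ H ∧ g = h ^ n * ↑a}
      one_mem' := ⟨0, 1, by simpa using H.one_mem, by simp⟩
      mul_mem' := by
        rintro x y ⟨n, a, haH, rfl⟩ ⟨m, a', ha'H, rfl⟩
        refine ⟨n + m, ⟨h ^ (-m) * ↑a * (h ^ (-m))⁻¹, conjmem _ a⟩ * a', ?_, ?_⟩
        · push_cast
          exact H.mul_mem (H.mul_mem (H.mul_mem (H.zpow_mem hhH _) haH)
            (H.inv_mem (H.zpow_mem hhH _))) ha'H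
        · push_cast
          group
      inv_mem' := by
        rintro x ⟨n, a, haH, rfl⟩
        refine ⟨-n, ⟨h ^ n * ↑a⁻¹ * (h ^ n)⁻¹, conjmem _ a⁻¹⟩, ?_, ?_⟩
        · push_cast
          exact H.mul_mem (H.mul_mem (H.zpow_mem hhH _) (H.inv_mem haH))
            (H.inv_mem (H.zpow_mem hhH _))
        · push_cast
          group } with hK
  have hKle : K ≤ H := by
    rintro x ⟨n, a, haH, rfl⟩
    exact H.mul_mem (H.zpow_mem hhH n) haH
  have hhK : h ∈ K := ⟨1, 1, by simpa using H.one_mem, by simp⟩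
  have hMK : ∀ a : A, (a : G) ∈ H → (a : G) ∈ K := fun a ha => ⟨0, a, ha, by simp⟩
  -- K is dense in H
  have hKdense : (H : Set G) ⊆ closure (K : Set G) := by
    intro x hx
    set L := K.topologicalClosure with hL
    have hLcl : IsClosed (L : Set G) := Subgroup.isClosed_topologicalClosure K
    have hLH : L ≤ H := Subgroup.topologicalClosure_minimal K hKle hHcl
    haveI : CompactSpace L := isCompact_iff_compactSpace.mp hLcl.isCompact
    set T : AddSubgroup ℤ_[p] :=
      { carrier := {c | ∃ g ∈ L, Multiplicative.toAdd (ρ g) = c}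
        zero_mem' := ⟨1, L.one_mem, by rw [map_one]; rfl⟩
        add_mem' := by
          rintro c c' ⟨g, hg, rfl⟩ ⟨g', hg', rfl⟩
          exact ⟨g * g', L.mul_mem hg hg', by rw [map_mul]; rfl⟩
        neg_mem' := by
          rintro c ⟨g, hg, rfl⟩
          exact ⟨g⁻¹, L.inv_mem hg, by rw [map_inv]; rfl⟩ } with hT
    have hTcl : IsClosed (T : Set ℤ_[p]) := by
      have h1 : (T : Set ℤ_[p])
          = (fun g : L => Multiplicative.toAdd (ρ (g : G))) '' Set.univ := by
        ext c
        constructor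
        · rintro ⟨g, hg, rfl⟩; exact ⟨⟨g, hg⟩, trivial, rfl⟩
        · rintro ⟨⟨g, hg⟩, -, rfl⟩; exact ⟨g, hg, rfl⟩
      rw [h1]
      exact ((isCompact_univ).image
        (continuous_toAdd.comp (hρc.comp continuous_subtype_val))).isClosed
    have hc₀T : c₀ ∈ T := ⟨h, K.le_topologicalClosure hhK, hρh⟩
    obtain ⟨zx, hzx⟩ := hgen _ ⟨x, hx, rfl⟩
    have hzT : zx * c₀ ∈ T := by
      have := aux_smul_mem_of_isClosed T hTcl zx hc₀T
      simpa [smul_eq_mul] using this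
    obtain ⟨k, hkL, hk⟩ := hzT
    have hxkA : x * k⁻¹ ∈ A := by
      apply (hρker _).mp
      have h0 : Multiplicative.toAdd (ρ (x * k⁻¹)) = 0 := by
        rw [map_mul, map_inv, toAdd_mul, toAdd_inv, hk, ← hzx]
        abel
      have := congrArg Multiplicative.ofAdd h0
      simpa using this
    have hxkL : x * k⁻¹ ∈ L :=
      K.le_topologicalClosure (hMK ⟨x * k⁻¹, hxkA⟩ (H.mul_mem hx (H.inv_mem (hLH hkL))))
    have hxL : x ∈ L := by
      have := L.mul_mem hxkL hkL
      simpa using this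
    rw [← Subgroup.topologicalClosure_coe]
    exact hxL
  -- every commutator of elements of K lies in PM
  have hcommK : ∀ g ∈ K, ∀ w ∈ K, g * w * g⁻¹ * w⁻¹ ∈ PM := by
    rintro _ ⟨n, a, haH, rfl⟩ _ ⟨m, a', ha'H, rfl⟩
    have hyH : h ^ m * (a' : G) ∈ H := H.mul_mem (H.zpow_mem hhH m) ha'H
    have e1 : (↑a : G) * (h ^ m * ↑a') * (↑a)⁻¹ * (h ^ m * ↑a')⁻¹ ∈ PM := by
      have h2 := hPMinv (hPMcommA (h ^ m * ↑a') hyH a haH)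
      have h3 : ((h ^ m * ↑a') * ↑a * (h ^ m * ↑a')⁻¹ * (↑a)⁻¹)⁻¹
          = (↑a : G) * (h ^ m * ↑a') * (↑a)⁻¹ * (h ^ m * ↑a')⁻¹ := by
        group
      rwa [h3] at h2
    have e2 := hPMconj (H.zpow_mem hhH n) e1
    have e3 := hPMconj (H.zpow_mem hhH m) (hPMcommA (h ^ n) (H.zpow_mem hhH n) a' ha'H)
    have e4 := hPMmul e2 e3
    have h5 : h ^ n * (↑a * (h ^ m * ↑a') * (↑a)⁻¹ * (h ^ m * ↑a')⁻¹) * (h ^ n)⁻¹ *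
        (h ^ m * (h ^ n * ↑a' * (h ^ n)⁻¹ * (↑a')⁻¹) * (h ^ m)⁻¹)
        = (h ^ n * ↑a) * (h ^ m * ↑a') * (h ^ n * ↑a)⁻¹ * (h ^ m * ↑a')⁻¹ := by
      group
    rwa [h5] at e4
  -- hence every commutator of elements of H lies in PM
  have hcommH : ∀ x ∈ H, ∀ y ∈ H, x * y * x⁻¹ * y⁻¹ ∈ PM := by
    intro x hx y hy
    have hCcl : IsClosed {q : G × G | q.1 * q.2 * q.1⁻¹ * q.2⁻¹ ∈ PM} := by
      exact hPMcl.preimage (((continuous_fst.mul continuous_snd).mul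
        continuous_fst.inv).mul continuous_snd.inv)
    have hsub : (K : Set G) ×ˢ (K : Set G) ⊆ {q : G × G | q.1 * q.2 * q.1⁻¹ * q.2⁻¹ ∈ PM} := by
      rintro ⟨g, w⟩ ⟨hg, hw⟩
      exact hcommK g hg w hw
    have hmem : (x, y) ∈ closure ((K : Set G) ×ˢ (K : Set G)) := by
      rw [closure_prod_eq]
      exact ⟨hKdense hx, hKdense hy⟩
    exact closure_minimal hsub hCcl hmem
  -- Powerful
  have hpowerful : Powerful p ↥H := by
    have hif : (if p = 2 then 4 else p) = p := if_neg (by omega)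
    unfold Powerful
    rw [hif]
    refine Subgroup.topologicalClosure_minimal _ ?_ (Subgroup.isClosed_topologicalClosure _)
    rw [commutator_eq_closure, Subgroup.closure_le]
    rintro w ⟨x, y, rfl⟩
    have hPMmem : ((x : G) * y * (x : G)⁻¹ * (y : G)⁻¹ : G) ∈ PM := hcommH ↑x x.2 ↑y y.2
    obtain ⟨a, hag, haH, v, hv, hfa⟩ := hPMmem
    obtain ⟨a₀, ha₀H, rfl⟩ := hv
    have hap : a = a₀ ^ p := by
      apply hfinj; rw [hfa, hfpow, Nat.cast_smul_eq_nsmul]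
    show _ ∈ pPow p ↥H
    unfold pPow
    apply Subgroup.le_topologicalClosure
    apply Subgroup.subset_closure
    refine ⟨⟨↑a₀, ha₀H⟩, ?_⟩
    apply Subtype.ext
    have hcoeC : ((@Bracket.bracket ↥H ↥H commutatorElement x y : ↥H) : G) = ↑x * ↑y * (↑x : G)⁻¹ * (↑y : G)⁻¹ := by
      rw [commutatorElement_def]; push_cast; ring
    push_cast
    rw [hcoeC, ← hag, hap]
    push_cast
    ring
  -- topological finite generation
  have htopfg : TopFG ↥H := by
    set Msub : Submodule ℤ_[p] (Fin (d - 1) → ℤ_[p]) :=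
      { carrier := Mv
        add_mem' := fun h1 h2 => Mv.add_mem h1 h2
        zero_mem' := Mv.zero_mem
        smul_mem' := fun z v hv => hMvsmul z hv } with hMsub
    obtain ⟨F, hF⟩ : Msub.FG := IsNoetherian.noetherian Msub
    have hch : ∀ v ∈ (F : Set (Fin (d - 1) → ℤ_[p])), ∃ a : A, (a : G) ∈ H ∧ f a = v := by
      intro v hv
      have hvM : v ∈ Msub := by
        rw [← hF]
        exact Submodule.subset_span hv
      exact hvM
    choose! c hcH hcf using hch
    set S : Finset ↥H :=
      insert (⟨h, hhH⟩ : ↥H)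
        (F.attach.image (fun v => (⟨↑(c v.1), hcH v.1 v.2⟩ : ↥H))) with hS
    refine ⟨S, ?_⟩
    set JG : Subgroup G := Subgroup.closure (Subtype.val '' (S : Set ↥H)) with hJG
    have hhJG : h ∈ JG := Subgroup.subset_closure ⟨⟨h, hhH⟩, by simp [hS], rfl⟩
    have hZac : ∀ a : A, (a : G) ∈ H → (a : G) ∈ JG.topologicalClosure := by
      have hJTcl : IsClosed ((JG.topologicalClosure : Subgroup G) : Set G) :=
        Subgroup.isClosed_topologicalClosure JG
      set Z : AddSubgroup (Fin (d - 1) → ℤ_[p]) :=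
        { carrier := {v | ∃ a : A, (a : G) ∈ JG.topologicalClosure ∧ f a = v}
          zero_mem' := ⟨1, by simpa using Subgroup.one_mem _, hfone⟩
          add_mem' := by
            rintro v w ⟨a, haJ, rfl⟩ ⟨a', ha'J, rfl⟩
            exact ⟨a * a', by push_cast; exact mul_mem haJ ha'J, hfmul a a'⟩
          neg_mem' := by
            rintro v ⟨a, haJ, rfl⟩
            exact ⟨a⁻¹, by push_cast; exact inv_mem haJ, hfinv a⟩ } with hZ
      have hZcl : IsClosed (Z : Set (Fin (d - 1) → ℤ_[p])) := by
        have h1 : (Z : Set (Fin (d - 1) → ℤ_[p]))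
            = f '' (Subtype.val ⁻¹' ((JG.topologicalClosure : Subgroup G) : Set G)) := by
          ext v
          constructor
          · rintro ⟨a, haJ, rfl⟩; exact ⟨a, haJ, rfl⟩
          · rintro ⟨a, haJ, rfl⟩; exact ⟨a, haJ, rfl⟩
        rw [h1]
        exact (((hJTcl.preimage continuous_subtype_val).isCompact).image hfcont).isClosed
      have hFZ : ∀ v ∈ (F : Set (Fin (d - 1) → ℤ_[p])), v ∈ Z := by
        intro v hv
        refine ⟨c v, ?_, hcf v hv⟩
        apply Subgroup.le_topologicalClosure
        apply Subgroup.subset_closure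
        exact ⟨⟨↑(c v), hcH v hv⟩, by simp [hS, Finset.mem_image]; exact Or.inr ⟨v, hv, rfl⟩, rfl⟩
      set Zsub : Submodule ℤ_[p] (Fin (d - 1) → ℤ_[p]) :=
        { carrier := Z
          add_mem' := fun h1 h2 => Z.add_mem h1 h2
          zero_mem' := Z.zero_mem
          smul_mem' := fun z v hv => aux_smul_mem_of_isClosed Z hZcl z hv } with hZsub
      have hspan : Submodule.span ℤ_[p] (F : Set (Fin (d - 1) → ℤ_[p])) ≤ Zsub :=
        Submodule.span_le.mpr hFZ
      intro a haH
      have hfaM : f a ∈ Msub := ⟨a, haH, rfl⟩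
      have hfaZ : f a ∈ Z := hspan (by rw [hF]; exact hfaM)
      obtain ⟨a', ha'J, hfa'⟩ := hfaZ
      have : a' = a := hfinj hfa'
      rwa [← this]
    have hKJT : K ≤ JG.topologicalClosure := by
      rintro x ⟨n, a, haH, rfl⟩
      exact mul_mem (zpow_mem (Subgroup.le_topologicalClosure JG hhJG) n) (hZac a haH)
    have hmain : (H : Set G) ⊆ closure (JG : Set G) := by
      intro x hx
      have h2 : closure (K : Set G) ⊆ ((JG.topologicalClosure : Subgroup G) : Set G) :=
        closure_minimal hKJT (Subgroup.isClosed_topologicalClosure JG)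
      have h3 := h2 (hKdense hx)
      rwa [Subgroup.topologicalClosure_coe] at h3
    rw [Subgroup.eq_top_iff']
    intro x
    have hindu : Topology.IsInducing (Subtype.val : ↥H → G) := Topology.IsInducing.subtypeVal
    show x ∈ closure ((Subgroup.closure (S : Set ↥H) : Subgroup ↥H) : Set ↥H)
    rw [hindu.closure_eq_preimage_closure_image]
    show (x : G) ∈ closure (Subtype.val '' ((Subgroup.closure (S : Set ↥H) : Subgroup ↥H) : Set ↥H))
    have himg : Subtype.val '' ((Subgroup.closure (S : Set ↥H) : Subgroup ↥H) : Set ↥H)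
        = (JG : Set G) := by
      have h1 : (Subgroup.closure ((S : Set ↥H))).map H.subtype
          = Subgroup.closure (Subtype.val '' (S : Set ↥H)) := by
        rw [MonoidHom.map_closure]
        rfl
      rw [hJG, ← h1, Subgroup.coe_map]
      rfl
    rw [himg]
    exact hmain x.2
  -- torsion-freeness
  have htf : Monoid.IsTorsionFree ↥H := by
    intro g hg hfin
    obtain ⟨n, hn, hgn⟩ := isOfFinOrder_iff_pow_eq_one.mp hfin
    apply hg
    have hGn : ((g : G)) ^ n = 1 := by
      have := congrArg Subtype.val hgn
      push_cast at this
      exact this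
    have hρg : ρ (↑g) = 1 := by
      have h1 : (ρ ↑g) ^ n = 1 := by rw [← map_pow, hGn, map_one]
      have h2 : (n : ℤ_[p]) * Multiplicative.toAdd (ρ ↑g) = 0 := by
        have h3 := congrArg Multiplicative.toAdd h1
        rw [toAdd_pow] at h3
        rw [← nsmul_eq_mul]
        exact h3
      have h4 : Multiplicative.toAdd (ρ ↑g) = 0 := by
        rcases mul_eq_zero.mp h2 with hcase | hcase
        · exact absurd hcase (by exact_mod_cast Nat.cast_ne_zero.mpr (by omega))
        · exact hcase
      have := congrArg Multiplicative.ofAdd h4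
      simpa using this
    have hgA : (↑g : G) ∈ A := (hρker _).mp hρg
    have haAn : (⟨↑g, hgA⟩ : A) ^ n = 1 := by
      apply Subtype.ext
      push_cast
      exact hGn
    have hfg0 : f ⟨↑g, hgA⟩ = 0 := by
      have h5 := congrArg f haAn
      rw [hfpow, hfone] at h5
      have h6 : (n : ℤ_[p]) • f ⟨↑g, hgA⟩ = 0 := by
        rw [Nat.cast_smul_eq_nsmul]; exact h5
      rcases smul_eq_zero.mp h6 with hcase | hcase
      · exact absurd hcase (by exact_mod_cast Nat.cast_ne_zero.mpr (by omega))
      · exact hcase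
    have h7 : (⟨↑g, hgA⟩ : A) = 1 := hfinj (by rw [hfg0, hfone])
    have h8 : (↑g : G) = 1 := by simpa using congrArg Subtype.val h7
    exact Subtype.ext (by simpa using h8)
  exact ⟨hpowerful, htopfg, hpowerful, htf⟩
end
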